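/- Let w be an admissible sequence. Then d_*(w), endowed with the norm ‖x‖ = sup_n (∑_{k=1}^n x̃_k)/(∑_{k=1}^n w_k), is a Banach space; in particular this expression defines a norm on d_*(w) and d_*(w) is complete with respect to it. -/

import Mathlib

open Filter Topology

/-- `rearrSum x n = ∑_{k=1}^n x̃_k`, the sum of the `n` largest values of `(|x_k|)`,
i.e. the `n`-th partial sum of the nonincreasing rearrangement of `(|x_k|)`; it is the
supremum of `∑_{k ∈ A} |x_k|` over finite sets `A ⊆ ℕ` of cardinality `n`. -/
noncomputable def rearrSum (x : ℕ → ℝ) (n : ℕ) : ℝ :=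
  sSup ((fun A : Finset ℕ => ∑ k ∈ A, |x k|) '' {A : Finset ℕ | A.card = n})

/-- A sequence of positive reals is admissible if it is nonincreasing, starts at `1`,
tends to `0` and is not summable. -/
def Admissible (w : ℕ → ℝ) : Prop :=
  (∀ n, 0 < w n) ∧ (∀ n, w (n + 1) ≤ w n) ∧ w 0 = 1 ∧
    Tendsto w atTop (𝓝 0) ∧ ¬ Summable w

/-- The underlying set of sequences of `d_*(w)`: sequences `x ∈ c₀` with
`(∑_{k=1}^n x̃_k) / (∑_{k=1}^n w_k) → 0`. -/
def dStarSet (w : ℕ → ℝ) : Set (ℕ → ℝ) :=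
  {x | Tendsto x atTop (𝓝 0) ∧
    Tendsto (fun n => rearrSum x n / ∑ k ∈ Finset.range n, w k) atTop (𝓝 0)}

/-- The norm of `d_*(w)`: `‖x‖ = sup_n (∑_{k=1}^n x̃_k) / (∑_{k=1}^n w_k)`. -/
noncomputable def dStarNorm (w : ℕ → ℝ) (x : ℕ → ℝ) : ℝ :=
  ⨆ n : ℕ, rearrSum x n / ∑ k ∈ Finset.range n, w k

/-- A normed space `D` is a representation of `d_*(w)` if there is a linear bijection `j`
from `D` onto the set of sequences of `d_*(w)` carrying the norm of `D` to the norm of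
`d_*(w)`; i.e. `D` "is" the space `d_*(w)` endowed with its canonical norm. -/
def IsDStarRep (w : ℕ → ℝ) (D : Type*) [NormedAddCommGroup D] [NormedSpace ℝ D]
    (j : D →ₗ[ℝ] (ℕ → ℝ)) : Prop :=
  Function.Injective j ∧ Set.range j = dStarSet w ∧ ∀ x : D, ‖x‖ = dStarNorm w (j x)

lemma rearrSum_set_nonempty (x : ℕ → ℝ) (n : ℕ) :
    ((fun A : Finset ℕ => ∑ k ∈ A, |x k|) '' {A : Finset ℕ | A.card = n}).Nonempty :=
  ⟨_, ⟨Finset.range n, Finset.card_range n, rfl⟩⟩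

lemma rearrSum_bddAbove {x : ℕ → ℝ} {C : ℝ} (hC : ∀ k, |x k| ≤ C) (n : ℕ) :
    BddAbove ((fun A : Finset ℕ => ∑ k ∈ A, |x k|) '' {A : Finset ℕ | A.card = n}) := by
  refine ⟨n * C, ?_⟩
  rintro s ⟨A, hA, rfl⟩
  calc ∑ k ∈ A, |x k| ≤ ∑ _k ∈ A, C := Finset.sum_le_sum fun k _ => hC k
    _ = A.card * C := by simp [Finset.sum_const, nsmul_eq_mul]
    _ = n * C := by rw [hA]

lemma le_rearrSum {x : ℕ → ℝ} {C : ℝ} (hC : ∀ k, |x k| ≤ C) {A : Finset ℕ} {n : ℕ}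
    (hA : A.card = n) : ∑ k ∈ A, |x k| ≤ rearrSum x n :=
  le_csSup (rearrSum_bddAbove hC n) ⟨A, hA, rfl⟩

lemma rearrSum_le {x : ℕ → ℝ} {n : ℕ} {B : ℝ}
    (h : ∀ A : Finset ℕ, A.card = n → ∑ k ∈ A, |x k| ≤ B) : rearrSum x n ≤ B := by
  apply csSup_le (rearrSum_set_nonempty x n)
  rintro s ⟨A, hA, rfl⟩
  exact h A hA

lemma rearrSum_nonneg {x : ℕ → ℝ} {C : ℝ} (hC : ∀ k, |x k| ≤ C) (n : ℕ) :
    0 ≤ rearrSum x n :=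
  le_trans (Finset.sum_nonneg fun k _ => abs_nonneg _)
    (le_rearrSum hC (Finset.card_range n))

lemma rearrSum_zero (x : ℕ → ℝ) : rearrSum x 0 = 0 := by
  have h : ((fun A : Finset ℕ => ∑ k ∈ A, |x k|) '' {A : Finset ℕ | A.card = 0}) = {0} := by
    ext s
    simp only [Set.mem_image, Set.mem_setOf_eq, Finset.card_eq_zero, Set.mem_singleton_iff]
    constructor
    · rintro ⟨A, rfl, rfl⟩; simp
    · rintro rfl; exact ⟨∅, rfl, by simp⟩
  rw [rearrSum, h, csSup_singleton]

lemma rearrSum_zero_fun (n : ℕ) : rearrSum (0 : ℕ → ℝ) n = 0 := by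
  refine le_antisymm (rearrSum_le fun A _ => by simp) ?_
  exact rearrSum_nonneg (C := 0) (fun k => by simp) n

lemma rearrSum_add_le {x y : ℕ → ℝ} {Cx Cy : ℝ} (hCx : ∀ k, |x k| ≤ Cx)
    (hCy : ∀ k, |y k| ≤ Cy) (n : ℕ) :
    rearrSum (x + y) n ≤ rearrSum x n + rearrSum y n := by
  apply rearrSum_le
  intro A hA
  calc ∑ k ∈ A, |(x + y) k| ≤ ∑ k ∈ A, (|x k| + |y k|) :=
        Finset.sum_le_sum fun k _ => abs_add_le _ _
    _ = ∑ k ∈ A, |x k| + ∑ k ∈ A, |y k| := Finset.sum_add_distrib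
    _ ≤ _ := add_le_add (le_rearrSum hCx hA) (le_rearrSum hCy hA)

lemma rearrSum_smul {x : ℕ → ℝ} {C : ℝ} (hC : ∀ k, |x k| ≤ C) (c : ℝ) (n : ℕ) :
    rearrSum (c • x) n = |c| * rearrSum x n := by
  rcases eq_or_ne c 0 with rfl | hc
  · simp only [zero_smul, abs_zero, zero_mul, rearrSum_zero_fun]
  · have hcpos : 0 < |c| := abs_pos.mpr hc
    have hCc : ∀ k, |(c • x) k| ≤ |c| * C := fun k => by
      simp only [Pi.smul_apply, smul_eq_mul, abs_mul]
      exact mul_le_mul_of_nonneg_left (hC k) (abs_nonneg c)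
    refine le_antisymm ?_ ?_
    · apply rearrSum_le
      intro A hA
      have h1 : ∑ k ∈ A, |(c • x) k| = |c| * ∑ k ∈ A, |x k| := by
        rw [Finset.mul_sum]
        exact Finset.sum_congr rfl fun k _ => by
          simp [Pi.smul_apply, abs_mul]
      rw [h1]
      exact mul_le_mul_of_nonneg_left (le_rearrSum hC hA) (abs_nonneg c)
    · have h2 : rearrSum x n ≤ |c|⁻¹ * rearrSum (c • x) n := by
        apply rearrSum_le
        intro A hA
        have h3 : ∑ k ∈ A, |x k| = |c|⁻¹ * ∑ k ∈ A, |(c • x) k| := by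
          rw [Finset.mul_sum]
          refine Finset.sum_congr rfl fun k _ => ?_
          rw [Pi.smul_apply, smul_eq_mul, abs_mul, inv_mul_cancel_left₀ hcpos.ne']
        rw [h3]
        exact mul_le_mul_of_nonneg_left (le_rearrSum hCc hA) (by positivity)
      calc |c| * rearrSum x n ≤ |c| * (|c|⁻¹ * rearrSum (c • x) n) :=
            mul_le_mul_of_nonneg_left h2 (abs_nonneg c)
        _ = rearrSum (c • x) n := by field_simp

lemma exists_bound_of_tendsto {x : ℕ → ℝ} (hx : Tendsto x atTop (𝓝 0)) :
    ∃ C, ∀ k, |x k| ≤ C := by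
  have h : Tendsto (fun k => |x k|) atTop (𝓝 0) := by
    simpa using hx.abs
  obtain ⟨C, hC⟩ := h.bddAbove_range
  exact ⟨C, fun k => hC ⟨k, rfl⟩⟩

section W
variable {w : ℕ → ℝ} (hw : Admissible w)
include hw

lemma W_nonneg (n : ℕ) : 0 ≤ ∑ k ∈ Finset.range n, w k :=
  Finset.sum_nonneg fun k _ => (hw.1 k).le

lemma W_pos {n : ℕ} (hn : 1 ≤ n) : 0 < ∑ k ∈ Finset.range n, w k :=
  Finset.sum_pos (fun k _ => hw.1 k) (by simp [Finset.nonempty_range_iff]; omega)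

lemma W_one : ∑ k ∈ Finset.range 1, w k = 1 := by
  simp [hw.2.2.1]

lemma W_tendsto : Tendsto (fun n => ∑ k ∈ Finset.range n, w k) atTop atTop :=
  (not_summable_iff_tendsto_nat_atTop_of_nonneg fun n => (hw.1 n).le).mp hw.2.2.2.2

end W

section Norm
variable {w : ℕ → ℝ} (hw : Admissible w)

lemma bddAbove_quot {x : ℕ → ℝ} (hx : x ∈ dStarSet w) :
    BddAbove (Set.range fun n => rearrSum x n / ∑ k ∈ Finset.range n, w k) :=
  hx.2.bddAbove_range

lemma term_le_norm {x : ℕ → ℝ} (hx : x ∈ dStarSet w) (n : ℕ) :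
    rearrSum x n / ∑ k ∈ Finset.range n, w k ≤ dStarNorm w x :=
  le_ciSup (bddAbove_quot hx) n

lemma dStarNorm_nonneg {x : ℕ → ℝ} (hx : x ∈ dStarSet w) : 0 ≤ dStarNorm w x := by
  have h := term_le_norm hx 0
  simpa [rearrSum_zero] using h

include hw

lemma rearrSum_le_norm_mul {x : ℕ → ℝ} (hx : x ∈ dStarSet w) (n : ℕ) :
    rearrSum x n ≤ dStarNorm w x * ∑ k ∈ Finset.range n, w k := by
  cases n with
  | zero => simp [rearrSum_zero]
  | succ m =>
      rw [← div_le_iff₀ (W_pos hw (Nat.succ_le_succ (Nat.zero_le m)))]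
      exact term_le_norm hx (m + 1)

lemma dStarNorm_le {x : ℕ → ℝ} {B : ℝ} (hB : 0 ≤ B)
    (h : ∀ n, rearrSum x n ≤ B * ∑ k ∈ Finset.range n, w k) : dStarNorm w x ≤ B := by
  apply ciSup_le
  intro n
  cases n with
  | zero => simpa [rearrSum_zero] using hB
  | succ m =>
      rw [div_le_iff₀ (W_pos hw (Nat.succ_le_succ (Nat.zero_le m)))]
      exact h (m + 1)

lemma abs_le_dStarNorm {x : ℕ → ℝ} (hx : x ∈ dStarSet w) (k : ℕ) :
    |x k| ≤ dStarNorm w x := by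
  obtain ⟨C, hC⟩ := exists_bound_of_tendsto hx.1
  have h1 : |x k| ≤ rearrSum x 1 := by
    have := le_rearrSum hC (A := {k}) (Finset.card_singleton k)
    simpa using this
  have h2 := term_le_norm hx 1
  rw [W_one hw, div_one] at h2
  exact h1.trans h2

end Norm

section Closure
variable {w : ℕ → ℝ} (hw : Admissible w)
include hw

lemma dStarSet_zero : (0 : ℕ → ℝ) ∈ dStarSet w := by
  constructor
  · exact tendsto_const_nhds
  · have h : (fun n => rearrSum (0 : ℕ → ℝ) n / ∑ k ∈ Finset.range n, w k)
        = fun _ => (0 : ℝ) := by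
      funext n; simp [rearrSum_zero_fun]
    rw [h]
    exact tendsto_const_nhds

lemma dStarSet_add {x y : ℕ → ℝ} (hx : x ∈ dStarSet w) (hy : y ∈ dStarSet w) :
    x + y ∈ dStarSet w := by
  obtain ⟨Cx, hCx⟩ := exists_bound_of_tendsto hx.1
  obtain ⟨Cy, hCy⟩ := exists_bound_of_tendsto hy.1
  have hCxy : ∀ k, |(x + y) k| ≤ Cx + Cy := fun k =>
    (abs_add_le _ _).trans (add_le_add (hCx k) (hCy k))
  constructor
  · have := hx.1.add hy.1; simp only [add_zero] at this; exact this
  · apply squeeze_zero (g := fun n => rearrSum x n / (∑ k ∈ Finset.range n, w k)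
      + rearrSum y n / (∑ k ∈ Finset.range n, w k))
    · intro n
      exact div_nonneg (rearrSum_nonneg hCxy n) (W_nonneg hw n)
    · intro n
      rw [← add_div]
      exact div_le_div_of_nonneg_right (rearrSum_add_le hCx hCy n) (W_nonneg hw n)
    · simpa using hx.2.add hy.2

lemma dStarSet_smul (c : ℝ) {x : ℕ → ℝ} (hx : x ∈ dStarSet w) :
    c • x ∈ dStarSet w := by
  obtain ⟨Cx, hCx⟩ := exists_bound_of_tendsto hx.1
  constructor
  · have := hx.1.const_smul c; simp only [smul_zero] at this; exact this
  · have h : (fun n => rearrSum (c • x) n / ∑ k ∈ Finset.range n, w k)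
        = fun n => |c| * (rearrSum x n / ∑ k ∈ Finset.range n, w k) := by
      funext n
      rw [rearrSum_smul hCx, mul_div_assoc]
    rw [h]
    simpa using hx.2.const_mul |c|

lemma dStarSet_sub {x y : ℕ → ℝ} (hx : x ∈ dStarSet w) (hy : y ∈ dStarSet w) :
    x - y ∈ dStarSet w := by
  have h := dStarSet_add hw hx (dStarSet_smul hw (-1) hy)
  simpa [sub_eq_add_neg] using h

end Closure

section NormAlg
variable {w : ℕ → ℝ} (hw : Admissible w)
include hw

lemma dStarNorm_zero_fun : dStarNorm w 0 = 0 := by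
  have h : (fun n => rearrSum (0 : ℕ → ℝ) n / ∑ k ∈ Finset.range n, w k)
      = fun _ => (0 : ℝ) := by
    funext n; simp [rearrSum_zero_fun]
  rw [dStarNorm]
  rw [show (⨆ n : ℕ, rearrSum (0 : ℕ → ℝ) n / ∑ k ∈ Finset.range n, w k)
      = ⨆ _ : ℕ, (0 : ℝ) from by rw [← h]]
  exact ciSup_const

lemma dStarNorm_eq_zero_iff {x : ℕ → ℝ} (hx : x ∈ dStarSet w) :
    dStarNorm w x = 0 ↔ x = 0 := by
  constructor
  · intro h
    funext k
    have h1 := abs_le_dStarNorm hw hx k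
    rw [h] at h1
    simpa using abs_nonpos_iff.mp h1
  · rintro rfl
    exact dStarNorm_zero_fun hw

lemma dStarNorm_smul (c : ℝ) {x : ℕ → ℝ} (hx : x ∈ dStarSet w) :
    dStarNorm w (c • x) = |c| * dStarNorm w x := by
  obtain ⟨Cx, hCx⟩ := exists_bound_of_tendsto hx.1
  have h : (fun n => rearrSum (c • x) n / ∑ k ∈ Finset.range n, w k)
      = fun n => |c| * (rearrSum x n / ∑ k ∈ Finset.range n, w k) := by
    funext n; rw [rearrSum_smul hCx, mul_div_assoc]
  rw [dStarNorm, show (⨆ n : ℕ, rearrSum (c • x) n / ∑ k ∈ Finset.range n, w k)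
      = ⨆ n : ℕ, |c| * (rearrSum x n / ∑ k ∈ Finset.range n, w k) from by rw [← h],
    ← Real.mul_iSup_of_nonneg (abs_nonneg c)]
  rfl

lemma dStarNorm_add_le {x y : ℕ → ℝ} (hx : x ∈ dStarSet w) (hy : y ∈ dStarSet w) :
    dStarNorm w (x + y) ≤ dStarNorm w x + dStarNorm w y := by
  obtain ⟨Cx, hCx⟩ := exists_bound_of_tendsto hx.1
  obtain ⟨Cy, hCy⟩ := exists_bound_of_tendsto hy.1
  apply ciSup_le
  intro n
  calc rearrSum (x + y) n / ∑ k ∈ Finset.range n, w k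
      ≤ (rearrSum x n + rearrSum y n) / ∑ k ∈ Finset.range n, w k :=
        div_le_div_of_nonneg_right (rearrSum_add_le hCx hCy n) (W_nonneg hw n)
    _ = rearrSum x n / (∑ k ∈ Finset.range n, w k)
        + rearrSum y n / ∑ k ∈ Finset.range n, w k := by rw [← add_div]
    _ ≤ dStarNorm w x + dStarNorm w y :=
        add_le_add (term_le_norm hx n) (term_le_norm hy n)

end NormAlg

lemma dStar_complete {w : ℕ → ℝ} (hw : Admissible w) (u : ℕ → ℕ → ℝ)
    (hu : ∀ n, u n ∈ dStarSet w)
    (hcau : ∀ ε : ℝ, 0 < ε → ∃ N : ℕ, ∀ m ≥ N, ∀ n ≥ N, dStarNorm w (u m - u n) < ε) :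
    ∃ x ∈ dStarSet w, Tendsto (fun n => dStarNorm w (u n - x)) atTop (𝓝 0) := by
  have husub : ∀ m n, u m - u n ∈ dStarSet w := fun m n =>
    dStarSet_sub hw (hu m) (hu n)
  -- coordinatewise limits
  have hcoord : ∀ k, ∃ l : ℝ, Tendsto (fun m => u m k) atTop (𝓝 l) := by
    intro k
    apply cauchySeq_tendsto_of_complete
    rw [Metric.cauchySeq_iff]
    intro ε hε
    obtain ⟨N, hN⟩ := hcau ε hε
    refine ⟨N, fun m hm n hn => ?_⟩
    rw [Real.dist_eq]
    calc |u m k - u n k| = |(u m - u n) k| := by simp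
      _ ≤ dStarNorm w (u m - u n) := abs_le_dStarNorm hw (husub m n) k
      _ < ε := hN m hm n hn
  choose x hx using hcoord
  -- key estimate
  have key : ∀ ε : ℝ, 0 < ε → ∃ N : ℕ, ∀ m ≥ N, ∀ A : Finset ℕ,
      ∑ k ∈ A, |u m k - x k| ≤ ε * ∑ k ∈ Finset.range A.card, w k := by
    intro ε hε
    obtain ⟨N, hN⟩ := hcau ε hε
    refine ⟨N, fun m hm A => ?_⟩
    have htend : Tendsto (fun m' => ∑ k ∈ A, |u m k - u m' k|) atTop
        (𝓝 (∑ k ∈ A, |u m k - x k|)) := by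
      apply tendsto_finset_sum
      intro k _
      exact (tendsto_const_nhds.sub (hx k)).abs
    apply le_of_tendsto htend
    filter_upwards [eventually_ge_atTop N] with m' hm'
    calc ∑ k ∈ A, |u m k - u m' k| = ∑ k ∈ A, |(u m - u m') k| := by simp
      _ ≤ rearrSum (u m - u m') A.card := by
          obtain ⟨C, hC⟩ := exists_bound_of_tendsto (husub m m').1
          exact le_rearrSum hC rfl
      _ ≤ dStarNorm w (u m - u m') * ∑ k ∈ Finset.range A.card, w k :=
          rearrSum_le_norm_mul hw (husub m m') A.card
      _ ≤ ε * ∑ k ∈ Finset.range A.card, w k :=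
          mul_le_mul_of_nonneg_right (hN m hm m' hm').le (W_nonneg hw A.card)
  -- x is bounded
  have hxb : ∃ C, ∀ k, |x k| ≤ C := by
    obtain ⟨N1, hN1⟩ := key 1 one_pos
    obtain ⟨C, hC⟩ := exists_bound_of_tendsto (hu N1).1
    refine ⟨C + 1, fun k => ?_⟩
    have h1 : |u N1 k - x k| ≤ 1 := by
      simpa [Finset.sum_range_one, hw.2.2.1] using hN1 N1 le_rfl {k}
    have h2 : |x k| - |u N1 k| ≤ |u N1 k - x k| := by
      rw [abs_sub_comm]
      exact abs_sub_abs_le_abs_sub _ _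
    linarith [hC k]
  -- x tends to 0
  have hx0 : Tendsto x atTop (𝓝 0) := by
    rw [Metric.tendsto_atTop]
    intro ε hε
    obtain ⟨N, hN⟩ := key (ε/3) (by positivity)
    have hum := (hu N).1
    rw [Metric.tendsto_atTop] at hum
    obtain ⟨K, hK⟩ := hum (ε/3) (by positivity)
    refine ⟨K, fun k hk => ?_⟩
    have h1 : |u N k - x k| ≤ ε/3 := by
      simpa [Finset.sum_range_one, hw.2.2.1] using hN N le_rfl {k}
    have h2 : |u N k| < ε/3 := by
      have := hK k hk
      rwa [Real.dist_eq, sub_zero] at this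
    have h3 : |x k| - |u N k| ≤ |u N k - x k| := by
      rw [abs_sub_comm]
      exact abs_sub_abs_le_abs_sub _ _
    rw [Real.dist_eq, sub_zero]
    calc |x k| ≤ |u N k| + |u N k - x k| := by linarith
      _ < ε := by linarith
  -- the quotient for x tends to 0
  have hxq : Tendsto (fun n => rearrSum x n / ∑ k ∈ Finset.range n, w k) atTop (𝓝 0) := by
    obtain ⟨Cx, hCx⟩ := hxb
    rw [Metric.tendsto_atTop]
    intro ε hε
    obtain ⟨N, hN⟩ := key (ε/3) (by positivity)
    obtain ⟨CN, hCN⟩ := exists_bound_of_tendsto (hu N).1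
    have huq := (hu N).2
    rw [Metric.tendsto_atTop] at huq
    obtain ⟨K, hK⟩ := huq (ε/3) (by positivity)
    refine ⟨K, fun n hn => ?_⟩
    have hsplit : ∀ n : ℕ, rearrSum x n ≤ rearrSum (u N) n
        + (ε/3) * ∑ k ∈ Finset.range n, w k := by
      intro n
      apply rearrSum_le
      intro A hA
      have h1 : ∑ k ∈ A, |x k| ≤ ∑ k ∈ A, |u N k| + ∑ k ∈ A, |u N k - x k| := by
        rw [← Finset.sum_add_distrib]
        apply Finset.sum_le_sum
        intro k _
        have h := abs_sub_abs_le_abs_sub (x k) (u N k)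
        rw [abs_sub_comm] at h
        linarith
      have h2 := hN N le_rfl A
      rw [hA] at h2
      exact h1.trans (add_le_add (le_rearrSum hCN hA) h2)
    rw [Real.dist_eq, sub_zero,
      abs_of_nonneg (div_nonneg (rearrSum_nonneg hCx n) (W_nonneg hw n))]
    cases n with
    | zero => simpa [rearrSum_zero] using hε
    | succ p =>
        have hWp := W_pos hw (Nat.succ_le_succ (Nat.zero_le p))
        have hq := hK (p+1) hn
        rw [Real.dist_eq, sub_zero,
          abs_of_nonneg (div_nonneg (rearrSum_nonneg hCN _) (W_nonneg hw _))] at hq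
        have hle : rearrSum x (p+1) / (∑ k ∈ Finset.range (p+1), w k)
            ≤ rearrSum (u N) (p+1) / (∑ k ∈ Finset.range (p+1), w k) + ε/3 := by
          rw [div_add' _ _ _ hWp.ne']
          exact div_le_div_of_nonneg_right (by linarith [hsplit (p+1)]) (W_nonneg hw _)
        linarith
  refine ⟨x, ⟨hx0, hxq⟩, ?_⟩
  rw [Metric.tendsto_atTop]
  intro ε hε
  obtain ⟨N, hN⟩ := key (ε/2) (by positivity)
  refine ⟨N, fun m hm => ?_⟩
  have hmem : u m - x ∈ dStarSet w := dStarSet_sub hw (hu m) ⟨hx0, hxq⟩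
  have hb : dStarNorm w (u m - x) ≤ ε/2 := by
    apply dStarNorm_le hw (by positivity)
    intro n
    apply rearrSum_le
    intro A hA
    have h := hN m hm A
    rw [hA] at h
    simpa using h
  rw [Real.dist_eq, sub_zero, abs_of_nonneg (dStarNorm_nonneg hmem)]
  linarith

/-- for an admissible `w`, the set `d_*(w)` is a linear subspace of the
space of real sequences, `‖x‖ = sup_n (∑_{k=1}^n x̃_k)/(∑_{k=1}^n w_k)` defines a norm on
it, and `d_*(w)` is complete for this norm; i.e. `d_*(w)` is a Banach space. -/
theorem dStar_banach (w : ℕ → ℝ) (hw : Admissible w) :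
    (0 : ℕ → ℝ) ∈ dStarSet w ∧
    (∀ x ∈ dStarSet w, ∀ y ∈ dStarSet w, x + y ∈ dStarSet w) ∧
    (∀ (c : ℝ), ∀ x ∈ dStarSet w, c • x ∈ dStarSet w) ∧
    (∀ x ∈ dStarSet w, (dStarNorm w x = 0 ↔ x = 0)) ∧
    (∀ (c : ℝ), ∀ x ∈ dStarSet w, dStarNorm w (c • x) = |c| * dStarNorm w x) ∧
    (∀ x ∈ dStarSet w, ∀ y ∈ dStarSet w,
      dStarNorm w (x + y) ≤ dStarNorm w x + dStarNorm w y) ∧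
    (∀ u : ℕ → (ℕ → ℝ), (∀ n, u n ∈ dStarSet w) →
      (∀ ε : ℝ, 0 < ε → ∃ N : ℕ, ∀ m ≥ N, ∀ n ≥ N, dStarNorm w (u m - u n) < ε) →
      ∃ x ∈ dStarSet w, Tendsto (fun n => dStarNorm w (u n - x)) atTop (𝓝 0)) :=
  ⟨dStarSet_zero hw, fun _ hx _ hy => dStarSet_add hw hx hy,
    fun c _ hx => dStarSet_smul hw c hx,
    fun _ hx => dStarNorm_eq_zero_iff hw hx,
    fun c _ hx => dStarNorm_smul hw c hx,
    fun _ hx _ hy => dStarNorm_add_le hw hx hy,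
    fun u hu hcau => dStar_complete hw u hu hcau⟩
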